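/- With f as above, for every z on the unit circle of the form z = e^{2πiθ} with |θ| ≤ ε/2, one has Re f(z) ≥ C/(kε) for an absolute constant C > 0. -/

import Mathlib

open Real Complex

/-- The Kahane–Katznelson function built from the `k`-th roots of unity. -/
noncomputable def KKfun (k : ℕ) (ε : ℝ) (z : ℂ) : ℂ :=
  (1 / k) * ∑ j ∈ Finset.range k,
    (1 + (ε:ℂ)) / (1 + (ε:ℂ) - (starRingEnd ℂ) (Complex.exp (2 * π * Complex.I * j / k)) * z)

lemma KK_aux_re (a : ℝ) (w : ℂ) :
    (((a:ℂ)) / ((a:ℂ) - w)).re = a * (a - w.re) / Complex.normSq ((a:ℂ) - w) := by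
  rw [Complex.div_re]
  simp [Complex.sub_re, Complex.sub_im]

lemma KK_aux_nonneg (a : ℝ) (ha : 1 ≤ a) (w : ℂ) (hw : ‖w‖ = 1) :
    0 ≤ (((a:ℂ)) / ((a:ℂ) - w)).re := by
  rw [KK_aux_re]
  have hre : w.re ≤ 1 := by
    have := Complex.re_le_norm w; rw [hw] at this; exact this
  exact div_nonneg (mul_nonneg (by linarith) (by linarith)) (Complex.normSq_nonneg _)

set_option maxHeartbeats 1000000 in
/-- There is an absolute constant `C > 0` such that, for every integer `k ≥ 2`, every
`ε ∈ (0,1)` and every `z = e^{2πiθ}` with `|θ| ≤ ε/2`, one has `Re f(z) ≥ C/(kε)`. -/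
theorem KKfun_re_lower_bound_near_one :
    ∃ C : ℝ, 0 < C ∧ ∀ (k : ℕ), 2 ≤ k → ∀ ε ∈ Set.Ioo (0:ℝ) 1, ∀ θ : ℝ, |θ| ≤ ε / 2 →
      C / (k * ε) ≤ (KKfun k ε (Complex.exp (2 * π * Complex.I * θ))).re := by
  refine ⟨1/21, by norm_num, ?_⟩
  intro k hk ε hε θ hθ
  obtain ⟨hε0, hε1⟩ := hε
  have hπ := Real.pi_pos
  have hπ2 : π ≤ 3.15 := by
    have := Real.pi_lt_d2; linarith
  set a : ℝ := 1 + ε with ha_def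
  have ha1 : 1 ≤ a := by simp [ha_def]; linarith
  set z : ℂ := Complex.exp (2 * π * Complex.I * θ) with hz_def
  have hzform : z = Complex.exp (((2 * π * θ : ℝ) : ℂ) * Complex.I) := by
    rw [hz_def]; congr 1; push_cast; ring
  have hzre : z.re = Real.cos (2 * π * θ) := by
    rw [hzform, Complex.exp_ofReal_mul_I_re]
  have hzim : z.im = Real.sin (2 * π * θ) := by
    rw [hzform, Complex.exp_ofReal_mul_I_im]
  have hzabs : ‖z‖ = 1 := by
    rw [hzform]; exact Complex.norm_exp_ofReal_mul_I _
  have hcast : (1 + (ε:ℂ)) = ((a : ℝ) : ℂ) := by push_cast [ha_def]; ring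
  -- abs of roots of unity
  have habs : ∀ j : ℕ, ‖(starRingEnd ℂ) (Complex.exp (2 * π * Complex.I * j / k)) * z‖ = 1 := by
    intro j
    rw [norm_mul, Complex.norm_conj, hzabs,
      show (2 * π * Complex.I * j / k : ℂ) = ((2 * π * j / k : ℝ) : ℂ) * Complex.I by push_cast; ring,
      Complex.norm_exp_ofReal_mul_I]
    ring
  -- rewrite KKfun real part
  have hk0 : (0:ℝ) < k := by positivity
  have hre : (KKfun k ε z).re
      = (1 / k) * ∑ j ∈ Finset.range k,
        (((a:ℂ)) / ((a:ℂ) - (starRingEnd ℂ) (Complex.exp (2 * π * Complex.I * j / k)) * z)).re := by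
    rw [KKfun, show (1 / (k:ℂ)) = (((1/k : ℝ)):ℂ) by push_cast; ring,
      Complex.re_ofReal_mul, Complex.re_sum]
    simp_rw [hcast]
  rw [hre]
  -- lower bound the sum by the j = 0 term
  have hterm0 : (1 / (21 * ε)) ≤
      (((a:ℂ)) / ((a:ℂ) - (starRingEnd ℂ) (Complex.exp (2 * π * Complex.I * (0:ℕ) / k)) * z)).re := by
    have h0 : (starRingEnd ℂ) (Complex.exp (2 * π * Complex.I * (0:ℕ) / k)) * z = z := by
      norm_num
    rw [h0, KK_aux_re]
    have hc : z.re = Real.cos (2 * π * θ) := hzre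
    -- normSq bound
    have hnsq : Complex.normSq ((a:ℂ) - z) = ε^2 + 2 * a * (1 - Real.cos (2 * π * θ)) := by
      rw [Complex.normSq_apply]
      simp only [Complex.sub_re, Complex.sub_im, Complex.ofReal_re, Complex.ofReal_im, hzre, hzim]
      have hsc := Real.sin_sq_add_cos_sq (2 * π * θ)
      rw [ha_def]; nlinarith [hsc]
    have hcosb : 1 - Real.cos (2 * π * θ) ≤ 2 * π^2 * θ^2 := by
      have := Real.one_sub_sq_div_two_le_cos (x := 2 * π * θ)
      nlinarith
    have hθ2 : θ^2 ≤ ε^2 / 4 := by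
      have := abs_nonneg θ
      nlinarith [_root_.sq_abs θ, abs_nonneg θ, hε0.le]
    have hπsq : π^2 ≤ 9.9225 := by nlinarith
    have h1 : 1 - Real.cos (2 * π * θ) ≤ 4.97 * ε^2 := by
      nlinarith [mul_le_mul_of_nonneg_right hπsq (sq_nonneg θ), hθ2, hcosb]
    have h3 : 0 ≤ 1 - Real.cos (2 * π * θ) := by
      linarith [Real.cos_le_one (2 * π * θ)]
    have hnsq_le : Complex.normSq ((a:ℂ) - z) ≤ 21 * ε^2 := by
      rw [hnsq]
      have h2 : a ≤ 2 := by rw [ha_def]; linarith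
      have h4 := mul_le_mul_of_nonneg_right h2 h3
      linarith
    have hnsq_pos : 0 < Complex.normSq ((a:ℂ) - z) := by
      rw [hnsq]
      have := mul_nonneg (by linarith : (0:ℝ) ≤ 2 * a) h3
      nlinarith [pow_pos hε0 2]
    have hnum : ε ≤ a * (a - z.re) := by
      have : Real.cos (2 * π * θ) ≤ 1 := Real.cos_le_one _
      rw [hzre, ha_def]; nlinarith
    rw [div_le_div_iff₀ (by positivity) hnsq_pos]
    nlinarith [mul_le_mul_of_nonneg_left hnum (by positivity : (0:ℝ) ≤ 21*ε), hnsq_le]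
  have hsum_ge : (1 / (21 * ε)) ≤ ∑ j ∈ Finset.range k,
      (((a:ℂ)) / ((a:ℂ) - (starRingEnd ℂ) (Complex.exp (2 * π * Complex.I * j / k)) * z)).re := by
    have hmem : (0:ℕ) ∈ Finset.range k := Finset.mem_range.mpr (by omega)
    exact hterm0.trans (Finset.single_le_sum
      (fun j _ => KK_aux_nonneg a ha1 _ (habs j)) hmem)
  calc (1/21 : ℝ) / (k * ε) = (1 / k) * (1 / (21 * ε)) := by
        field_simp
    _ ≤ _ := by
        apply mul_le_mul_of_nonneg_left hsum_ge (by positivity)
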